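/- arXiv:2306.08104 — 2 statements merged into one kernel-verified Lean document; each statement's English description precedes it below -/
import Mathlib

section
/- Let n ≥ 1 and r ≥ 1, let S = ℂ[α_0,…,α_n] with the standard grading and 𝔪 = (α_0,…,α_n). For every homogeneous ideal J ⊆ S that is 𝔪-saturated and satisfies dim_ℂ (S/J)_k = r for all sufficiently large k, there exists a homogeneous ideal I ⊆ S with dim_ℂ (S/I)_k = min(dim_ℂ S_k, r) for every k ≥ 0 and with (I : 𝔪^∞) = J. -/
open MvPolynomial

noncomputable section

/-- The saturation `(I : B^∞) = {f ∈ S : f·B^k ⊆ I for some k ≥ 0}`, as a set. -/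
def satSet {R : Type*} [CommRing R] (I B : Ideal R) : Set R :=
  {x | ∃ k : ℕ, ∀ g ∈ B ^ k, x * g ∈ I}

/-- The degree-`k` graded piece `I_k = I ∩ S_k` of an ideal of `ℂ[α_0,…,α_n]`. -/
def idealPiece (n : ℕ) (I : Ideal (MvPolynomial (Fin (n + 1)) ℂ)) (k : ℕ) :
    Submodule ℂ (MvPolynomial (Fin (n + 1)) ℂ) :=
  Submodule.restrictScalars ℂ I ⊓ homogeneousSubmodule (Fin (n + 1)) ℂ k

/-- A homogeneous ideal: `I = ⊕_k I_k`. -/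
def IsHomog (n : ℕ) (I : Ideal (MvPolynomial (Fin (n + 1)) ℂ)) : Prop :=
  Submodule.restrictScalars ℂ I = ⨆ k : ℕ, idealPiece n I k

/-- The Hilbert function of `S/I`: `H_{S/I}(k) = dim S_k − dim I_k`. -/
def HF (n : ℕ) (I : Ideal (MvPolynomial (Fin (n + 1)) ℂ)) (k : ℕ) : ℕ :=
  Module.finrank ℂ ↥(homogeneousSubmodule (Fin (n + 1)) ℂ k) -
    Module.finrank ℂ ↥(idealPiece n I k)

/-- The irrelevant maximal ideal `𝔪 = (α_0,…,α_n)`. -/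
def irrel (n : ℕ) : Ideal (MvPolynomial (Fin (n + 1)) ℂ) :=
  Ideal.span (Set.range (X : Fin (n + 1) → MvPolynomial (Fin (n + 1)) ℂ))

/-! ### Auxiliary material -/

namespace HilbAux

open Module Submodule Finset

abbrev PS (n : ℕ) := MvPolynomial (Fin (n + 1)) ℂ

abbrev Sk (n k : ℕ) : Submodule ℂ (PS n) := homogeneousSubmodule (Fin (n + 1)) ℂ k

instance fdSk (n k : ℕ) : FiniteDimensional ℂ ↥(Sk n k) := by
  have h : Sk n k ≤ restrictTotalDegree (Fin (n+1)) ℂ k := by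
    intro p hp
    rw [mem_restrictTotalDegree]
    exact IsHomogeneous.totalDegree_le hp
  exact Submodule.finiteDimensional_of_le h

lemma fdOfLe {n k : ℕ} {W : Submodule ℂ (PS n)} (h : W ≤ Sk n k) :
    FiniteDimensional ℂ ↥W :=
  Submodule.finiteDimensional_of_le h

/-- Evaluation at a point, as a linear functional. -/
def ev {n : ℕ} (q : Fin (n + 1) → ℂ) : PS n →ₗ[ℂ] ℂ := (aeval q).toLinearMap

lemma ev_apply {n : ℕ} (q : Fin (n + 1) → ℂ) (f : PS n) : ev q f = eval q f :=
  congrFun (congrArg DFunLike.coe (coe_aeval_eq_eval q)) f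

lemma ev_mul {n : ℕ} (q : Fin (n + 1) → ℂ) (f g : PS n) :
    ev q (f * g) = ev q f * ev q g := by
  simp [ev_apply]

lemma exists_eval_ne_zero {n : ℕ} {f : PS n} (hf : f ≠ 0) : ∃ q, eval q f ≠ 0 := by
  by_contra hc
  push_neg at hc
  exact hf (MvPolynomial.funext (fun x => by simp [hc x]))

lemma comp_mul_mem {n : ℕ} (V : ℕ → Submodule ℂ (PS n)) (f g : PS n)
    (H : ∀ j i : ℕ, homogeneousComponent j f * homogeneousComponent i g ∈ V (j + i)) :
    ∀ m, homogeneousComponent m (f * g) ∈ V m := by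
  intro m
  have h1 : (∑ j ∈ Finset.range (f.totalDegree + 1), homogeneousComponent j f) *
      (∑ i ∈ Finset.range (g.totalDegree + 1), homogeneousComponent i g) = f * g := by
    rw [sum_homogeneousComponent, sum_homogeneousComponent]
  rw [← h1, Finset.sum_mul_sum, map_sum]
  refine Submodule.sum_mem _ (fun j hj => ?_)
  rw [map_sum]
  refine Submodule.sum_mem _ (fun i hi => ?_)
  have hmem : homogeneousComponent j f * homogeneousComponent i g ∈ Sk n (j + i) :=
    (mem_homogeneousSubmodule _ _).mpr
      ((homogeneousComponent_isHomogeneous j f).mul (homogeneousComponent_isHomogeneous i g))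
  rw [homogeneousComponent_of_mem hmem]
  split_ifs with hmji
  · subst hmji; exact H j i
  · exact Submodule.zero_mem _

lemma finrank_inf_ker {M : Type*} [AddCommGroup M] [Module ℂ M]
    (W : Submodule ℂ M) [FiniteDimensional ℂ W] (φ : M →ₗ[ℂ] ℂ) {u : M}
    (hu : u ∈ W) (hφ : φ u ≠ 0) :
    finrank ℂ ↥(W ⊓ LinearMap.ker φ) + 1 = finrank ℂ ↥W := by
  set ψ : ↥W →ₗ[ℂ] ℂ := φ.comp W.subtype with hψ
  have hker : LinearMap.ker ψ = Submodule.comap W.subtype (LinearMap.ker φ) :=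
    LinearMap.ker_comp _ _
  have hrange : LinearMap.range ψ = ⊤ := by
    rcases Ideal.eq_bot_or_top (LinearMap.range ψ) with h | h
    · exfalso
      apply hφ
      have : ψ ⟨u, hu⟩ ∈ LinearMap.range ψ := LinearMap.mem_range_self _ _
      rw [h, Submodule.mem_bot] at this
      simpa [hψ] using this
    · exact h
  have hrank := LinearMap.finrank_range_add_finrank_ker ψ
  rw [hrange, hker] at hrank
  have h1 : finrank ℂ ↥(⊤ : Submodule ℂ ℂ) = 1 := by
    rw [finrank_top]; exact Module.finrank_self ℂ
  have h2 : finrank ℂ ↥(Submodule.comap W.subtype (LinearMap.ker φ))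
      = finrank ℂ ↥(W ⊓ LinearMap.ker φ) := by
    have he : Submodule.comap W.subtype (W ⊓ LinearMap.ker φ)
        = Submodule.comap W.subtype (LinearMap.ker φ) := by
      rw [Submodule.comap_inf, Submodule.comap_subtype_self, top_inf_eq]
    rw [← he]
    exact (Submodule.comapSubtypeEquivOfLe inf_le_left).finrank_eq
  omega

lemma dS_mono (n : ℕ) {k k' : ℕ} (h : k ≤ k') :
    finrank ℂ ↥(Sk n k) ≤ finrank ℂ ↥(Sk n k') := by
  obtain ⟨m, rfl⟩ := Nat.exists_eq_add_of_le h
  set φ : PS n →ₗ[ℂ] PS n := LinearMap.mulLeft ℂ ((X 0 : PS n) ^ m) with hφ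
  have hinj : Function.Injective φ := by
    intro a b hab
    simp only [hφ, LinearMap.mulLeft_apply] at hab
    exact mul_left_cancel₀ (pow_ne_zero m (X_ne_zero 0)) hab
  have hle : (Sk n k).map φ ≤ Sk n (k + m) := by
    rintro _ ⟨f, hf, rfl⟩
    simp only [hφ, LinearMap.mulLeft_apply]
    have hX : ((X 0 : PS n) ^ m).IsHomogeneous m := by
      simpa using (isHomogeneous_X ℂ (0 : Fin (n + 1))).pow m
    have := hX.mul ((mem_homogeneousSubmodule _ _).mp hf)
    rw [Nat.add_comm m k] at this
    exact (mem_homogeneousSubmodule _ _).mpr this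
  calc finrank ℂ ↥(Sk n k) = finrank ℂ ↥((Sk n k).map φ) :=
        (Submodule.equivMapOfInjective φ hinj (Sk n k)).finrank_eq
    _ ≤ finrank ℂ ↥(Sk n (k + m)) := Submodule.finrank_mono hle

lemma X_mem_irrel {n : ℕ} (i : Fin (n + 1)) : X i ∈ irrel n :=
  Ideal.subset_span ⟨i, rfl⟩

lemma comp_zero_of_mem_irrel {n : ℕ} {g : PS n} (hg : g ∈ irrel n) :
    homogeneousComponent 0 g = 0 := by
  have : ∀ x ∈ (Set.range (X : Fin (n + 1) → PS n)), homogeneousComponent 0 x = 0 := by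
    rintro _ ⟨i, rfl⟩
    rw [homogeneousComponent_of_mem ((mem_homogeneousSubmodule _ _).mpr (isHomogeneous_X ℂ i))]
    simp
  refine Submodule.span_induction this (by simp) (fun a b _ _ ha hb => by rw [map_add, ha, hb, add_zero])
    (fun a x _ hx => ?_) hg
  have hax : a • x = a * x := rfl
  have hmem : homogeneousComponent 0 (a * x) ∈ (⊥ : Submodule ℂ (PS n)) := by
    refine comp_mul_mem (fun m => if m = 0 then ⊥ else ⊤) a x (fun j i => ?_) 0
    show _ ∈ if j + i = 0 then (⊥ : Submodule ℂ (PS n)) else ⊤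
    split_ifs with hji
    · have hj : j = 0 := by omega
      have hi : i = 0 := by omega
      subst hj; subst hi
      rw [hx, mul_zero]
      exact Submodule.zero_mem _
    · exact Submodule.mem_top
  rw [hax]
  simpa using hmem
  

lemma comp_eq_zero_of_mem_irrel_pow {n : ℕ} {d : ℕ} {g : PS n} (hg : g ∈ (irrel n) ^ d) :
    ∀ i < d, homogeneousComponent i g = 0 := by
  induction d generalizing g with
  | zero => intro i hi; omega
  | succ d ih =>
    rw [pow_succ] at hg
    refine Submodule.mul_induction_on hg (fun a ha b hb => ?_)
      (fun a b ha hb i hi => by rw [map_add, ha i hi, hb i hi, add_zero])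
    intro i hi
    have hmem := comp_mul_mem (fun m => if m < d + 1 then ⊥ else ⊤) a b ?_ i
    · rw [if_pos hi] at hmem
      simpa using hmem
    · intro j i'
      show _ ∈ if j + i' < d + 1 then (⊥ : Submodule ℂ (PS n)) else ⊤
      split_ifs with hji
      · rcases Nat.lt_or_ge j d with hj | hj
        · rw [ih ha j hj, zero_mul]
          exact Submodule.zero_mem _
        · have hi' : i' = 0 := by omega
          subst hi'
          rw [comp_zero_of_mem_irrel hb, mul_zero]
          exact Submodule.zero_mem _
      · exact Submodule.mem_top

lemma comp_mem_of_mem {n : ℕ} {J : Ideal (PS n)} (hJhom : IsHomog n J) {f : PS n}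
    (hf : f ∈ J) (m : ℕ) : homogeneousComponent m f ∈ idealPiece n J m := by
  have hf' : f ∈ ⨆ k : ℕ, idealPiece n J k := by
    rw [← hJhom]
    exact hf
  refine Submodule.iSup_induction (motive := fun y => homogeneousComponent m y ∈ idealPiece n J m)
    (fun k => idealPiece n J k) hf' (fun k y hy => ?_) (by simp)
    (fun y z hy hz => by
      show homogeneousComponent m (y + z) ∈ idealPiece n J m
      rw [map_add]; exact Submodule.add_mem _ hy hz)
  show homogeneousComponent m y ∈ idealPiece n J m
  have hySk : y ∈ Sk n k := hy.2
  rw [homogeneousComponent_of_mem hySk]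
  split_ifs with hmk
  · subst hmk; exact hy
  · exact Submodule.zero_mem _

lemma exists_nzd {n : ℕ} (J : Ideal (PS n))
    (hJsat : satSet J (irrel n) = (J : Set (PS n))) :
    ∃ ℓ : PS n, ℓ ∈ Sk n 1 ∧ ∀ f, ℓ * f ∈ J → f ∈ J := by
  classical
  obtain ⟨s, hsinf, hsprim⟩ : ∃ s : Finset (Ideal (PS n)), s.inf id = J ∧
      ∀ ⦃Q : Ideal (PS n)⦄, Q ∈ s → Q.IsPrimary := Submodule.isLasker (PS n) (PS n) J
  set L : (Fin (n + 1) → ℂ) →ₗ[ℂ] PS n :=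
    { toFun := fun a => ∑ i, a i • X i
      map_add' := by intro a b; simp [add_smul, Finset.sum_add_distrib]
      map_smul' := by intro c a; simp [smul_smul, Finset.smul_sum] } with hL
  have hLapp : ∀ a : Fin (n + 1) → ℂ, L a = ∑ i, a i • X i := fun a => rfl
  have hLsingle : ∀ i, L (Pi.single i 1) = X i := by
    intro i
    rw [hLapp]
    rw [Finset.sum_eq_single i (fun j _ hj => by simp [Pi.single_apply, hj]) (by simp)]
    simp
  have hLSk : ∀ a, L a ∈ Sk n 1 := by
    intro a
    rw [hLapp]
    refine Submodule.sum_mem (Sk n 1) (fun i _ => Submodule.smul_mem (Sk n 1) (a i) ?_)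
    exact (mem_homogeneousSubmodule _ _).mpr (isHomogeneous_X ℂ i)
  set sB : Finset (Ideal (PS n)) := s.filter (fun Q => ¬ irrel n ≤ Q.radical) with hsB
  have hcert : ∀ Q ∈ sB, ∃ q : PS n, q ≠ 0 ∧ ∀ a : Fin (n + 1) → ℂ,
      eval a q ≠ 0 → L a ∉ Q.radical := by
    intro Q hQ
    have hQrad : ¬ irrel n ≤ Q.radical := by
      have := (Finset.mem_filter.mp hQ).2
      simpa using this
    set U : Submodule ℂ (Fin (n + 1) → ℂ) :=
      Submodule.comap L (Submodule.restrictScalars ℂ Q.radical) with hU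
    have hUmem : ∀ a, a ∈ U ↔ L a ∈ Q.radical := fun a => Iff.rfl
    have hUproper : U < ⊤ := by
      rcases lt_or_eq_of_le (le_top : U ≤ ⊤) with h | h
      · exact h
      · exfalso
        apply hQrad
        rw [irrel, Ideal.span_le]
        rintro _ ⟨i, rfl⟩
        have hi : Pi.single i 1 ∈ U := by rw [h]; exact Submodule.mem_top
        rw [hUmem, hLsingle] at hi
        exact hi
    obtain ⟨φ, hφne, hφbot⟩ := U.exists_dual_map_eq_bot_of_lt_top hUproper inferInstance
    have hUker : U ≤ LinearMap.ker φ := by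
      intro u hu
      rw [LinearMap.mem_ker]
      have : φ u ∈ U.map φ := Submodule.mem_map_of_mem hu
      rwa [hφbot, Submodule.mem_bot] at this
    set q : PS n := ∑ i, C (φ (Pi.single i 1)) * X i with hq
    have heval : ∀ a, eval a q = φ a := by
      intro a
      rw [hq]
      rw [map_sum]
      conv_rhs => rw [pi_eq_sum_univ a, map_sum]
      refine Finset.sum_congr rfl (fun i _ => ?_)
      have h1 : (fun j => if i = j then (1 : ℂ) else 0) = Pi.single i 1 := by
        funext j; simp [Pi.single_apply, eq_comm]
      rw [h1, map_smul]
      simp [mul_comm]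
    refine ⟨q, ?_, ?_⟩
    · intro h0
      apply hφne
      apply LinearMap.ext
      intro a
      rw [← heval a, h0]
      simp
    · intro a ha hmem
      apply ha
      rw [heval]
      exact hUker ((hUmem a).mpr hmem)
  set F : {Q // Q ∈ sB} → PS n := fun x => (hcert x.1 x.2).choose with hF
  have hgne : (∏ x ∈ sB.attach, F x) ≠ 0 :=
    Finset.prod_ne_zero_iff.mpr (fun x _ => (hcert x.1 x.2).choose_spec.1)
  obtain ⟨a, ha⟩ := exists_eval_ne_zero hgne
  have hbadall : ∀ Q (hQ : Q ∈ sB), L a ∉ Q.radical := by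
    intro Q hQ
    refine (hcert Q hQ).choose_spec.2 a ?_
    have : eval a (∏ x ∈ sB.attach, F x) = ∏ x ∈ sB.attach, eval a (F x) := map_prod _ _ _
    rw [this] at ha
    exact Finset.prod_ne_zero_iff.mp ha ⟨Q, hQ⟩ (Finset.mem_attach _ _)
  refine ⟨L a, hLSk a, ?_⟩
  intro f hf
  have hT : ∀ Q ∈ s, ∃ t : ℕ, (¬ irrel n ≤ Q.radical) ∨ (irrel n) ^ t ≤ Q := by
    intro Q hQ
    by_cases h : irrel n ≤ Q.radical
    · obtain ⟨t, ht⟩ := Ideal.exists_pow_le_of_le_radical_of_fg h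
        (Submodule.fg_span (Set.finite_range _))
      exact ⟨t, Or.inr ht⟩
    · exact ⟨0, Or.inl h⟩
  set T := s.attach.sup (fun Q => (hT Q.1 Q.2).choose) with hTdef
  have hsat' : f ∈ satSet J (irrel n) := by
    refine ⟨T, fun g' hg' => ?_⟩
    rw [← hsinf, Submodule.mem_finsetInf]
    intro Q hQ
    show f * g' ∈ Q
    rcases (hT Q hQ).choose_spec with hbad | hpow
    · have hQB : Q ∈ sB := Finset.mem_filter.mpr ⟨hQ, by simpa using hbad⟩
      have hJQ : J ≤ Q := by
        rw [← hsinf]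
        exact Finset.inf_le hQ
      have hmem : f * L a ∈ Q := by
        rw [mul_comm]
        exact hJQ hf
      rcases (Ideal.isPrimary_iff.mp (hsprim hQ)).2 hmem with h | h
      · exact Ideal.mul_mem_right _ _ h
      · exact absurd h (hbadall Q hQB)
    · have hle : (irrel n) ^ T ≤ (irrel n) ^ ((hT Q hQ).choose) :=
        Ideal.pow_le_pow_right (Finset.le_sup (f := fun Q : {Q // Q ∈ s} => (hT Q.1 Q.2).choose) (Finset.mem_attach s ⟨Q, hQ⟩))
      exact Ideal.mul_mem_left _ f (hpow (hle hg'))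
  rw [hJsat] at hsat'
  exact hsat'

end HilbAux

set_option maxHeartbeats 2000000 in
set_option synthInstance.maxHeartbeats 1000000 in
open HilbAux Module Submodule Finset in
/-- For every `𝔪`-saturated homogeneous ideal `J` with `dim (S/J)_k = r` for `k ≫ 0` there is a
homogeneous ideal `I` with `dim (S/I)_k = min(dim S_k, r)` for all `k` and `(I : 𝔪^∞) = J`. -/
theorem surjectivity_onto_hilbert_scheme (n r : ℕ) (hn : 1 ≤ n) (hr : 1 ≤ r)
    (J : Ideal (MvPolynomial (Fin (n + 1)) ℂ))
    (hJhom : IsHomog n J)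
    (hJsat : satSet J (irrel n) = (J : Set (MvPolynomial (Fin (n + 1)) ℂ)))
    (hJr : ∃ N : ℕ, ∀ k, N ≤ k → HF n J k = r) :
    ∃ I : Ideal (MvPolynomial (Fin (n + 1)) ℂ),
      IsHomog n I ∧
      (∀ k : ℕ, HF n I k = min (Module.finrank ℂ ↥(homogeneousSubmodule (Fin (n + 1)) ℂ k)) r) ∧
      satSet I (irrel n) = (J : Set (MvPolynomial (Fin (n + 1)) ℂ)) := by
  classical
  obtain ⟨N, hN⟩ := hJr
  set dS : ℕ → ℕ := fun k => finrank ℂ ↥(Sk n k) with hdS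
  set dJ : ℕ → ℕ := fun k => finrank ℂ ↥(idealPiece n J k) with hdJ
  -- basic facts
  have hJle : ∀ k, idealPiece n J k ≤ Sk n k := fun k => inf_le_right
  have hfdJ : ∀ k, FiniteDimensional ℂ ↥(idealPiece n J k) := fun k => fdOfLe (hJle k)
  have hdJle : ∀ k, dJ k ≤ dS k := by
    intro k
    simp only [hdJ, hdS]
    exact Submodule.finrank_mono (hJle k)
  -- a linear nonzerodivisor modulo J
  obtain ⟨ℓ, hℓ1, hℓnzd⟩ := exists_nzd J hJsat
  -- the Hilbert function of J is nondecreasing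
  have hstep : ∀ k, dS k + dJ (k + 1) ≤ dS (k + 1) + dJ k := by
    intro k
    haveI := hfdJ k
    haveI := hfdJ (k + 1)
    set Qk : Submodule ℂ ↥(Sk n (k + 1)) :=
      Submodule.comap (Sk n (k + 1)).subtype (idealPiece n J (k + 1)) with hQk
    have hinto : ∀ f : ↥(Sk n k),
        ((LinearMap.mulLeft ℂ ℓ).comp (Sk n k).subtype) f ∈ Sk n (k + 1) := by
      intro f
      have h := ((mem_homogeneousSubmodule _ _).mp hℓ1).mul
        ((mem_homogeneousSubmodule _ _).mp f.2)
      rw [Nat.add_comm 1 k] at h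
      exact (mem_homogeneousSubmodule _ _).mpr h
    set Φ₀ : ↥(Sk n k) →ₗ[ℂ] ↥(Sk n (k + 1)) :=
      LinearMap.codRestrict _ ((LinearMap.mulLeft ℂ ℓ).comp (Sk n k).subtype) hinto with hΦ₀
    set Φ : ↥(Sk n k) →ₗ[ℂ] (↥(Sk n (k + 1)) ⧸ Qk) := Qk.mkQ.comp Φ₀ with hΦ
    have hkerΦ : LinearMap.ker Φ = Submodule.comap (Sk n k).subtype (idealPiece n J k) := by
      ext f
      simp only [hΦ, hΦ₀, LinearMap.mem_ker, LinearMap.comp_apply, Submodule.mkQ_apply,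
        Submodule.Quotient.mk_eq_zero, Submodule.mem_comap, LinearMap.codRestrict_apply,
        LinearMap.mulLeft_apply, Submodule.coe_subtype, hQk]
      constructor
      · intro hfk
        have h2 : (f : MvPolynomial (Fin (n+1)) ℂ) ∈ J := hℓnzd _ hfk.1
        exact ⟨h2, f.2⟩
      · intro hfk
        exact ⟨Ideal.mul_mem_left _ _ hfk.1, hinto f⟩
    have h1 := LinearMap.finrank_range_add_finrank_ker Φ
    have h2 : finrank ℂ ↥(LinearMap.range Φ) ≤ finrank ℂ (↥(Sk n (k + 1)) ⧸ Qk) :=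
      Submodule.finrank_le _
    have h3 := Submodule.finrank_quotient_add_finrank Qk
    have h4 : finrank ℂ ↥Qk = dJ (k + 1) :=
      (Submodule.comapSubtypeEquivOfLe (hJle (k + 1))).finrank_eq
    have h5 : finrank ℂ ↥(LinearMap.ker Φ) = dJ k := by
      rw [hkerΦ]
      exact (Submodule.comapSubtypeEquivOfLe (hJle k)).finrank_eq
    have h6 : finrank ℂ ↥(Sk n k) = dS k := rfl
    have h7 : finrank ℂ ↥(Sk n (k + 1)) = dS (k + 1) := rfl
    omega
  have hmono1 : ∀ k, dS k - dJ k ≤ dS (k + 1) - dJ (k + 1) := by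
    intro k
    have := hstep k
    have := hdJle k
    have := hdJle (k + 1)
    omega
  have hmono : ∀ k k', k ≤ k' → dS k - dJ k ≤ dS k' - dJ k' := by
    intro k k' hkk'
    induction k', hkk' using Nat.le_induction with
    | base => exact le_rfl
    | succ k' hkk' ih => exact le_trans ih (hmono1 k')
  have hHFJ : ∀ k, HF n J k = dS k - dJ k := fun k => rfl
  have hler : ∀ k, dS k - dJ k ≤ r := by
    intro k
    have h1 := hmono k (max k N) (le_max_left _ _)
    have h2 := hN (max k N) (le_max_right _ _)
    rw [hHFJ] at h2
    omega
  -- the deficiency function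
  set c : ℕ → ℕ := fun k => min (dS k) r - (dS k - dJ k) with hc
  have hcN : ∀ k, N ≤ k → c k = 0 := by
    intro k hk
    have := hN k hk
    rw [hHFJ] at this
    have := hdJle k
    simp only [hc]
    omega
  have hcdJ : ∀ k, c k ≤ dJ k := by
    intro k; have h1 := hdJle k; simp only [hc]; omega
  have hcr : ∀ k, c k ≤ r := by
    intro k; simp only [hc]; omega
  have hcmono : ∀ k k', k ≤ k' → r < dS k → c k' ≤ c k := by
    intro k k' hkk' hrk
    have h1 := hmono k k' hkk'
    have h2 := dS_mono n hkk'
    have h3 := hler k; have h4 := hler k'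
    have h5 := hdJle k; have h6 := hdJle k'
    simp only [hc, hdS] at *
    omega
  -- greedy choice of points
  have key : ∀ j : ℕ, ∃ p : ℕ → (Fin (n + 1) → ℂ), ∀ k i, i ≤ j → i ≤ c k →
      finrank ℂ ↥(idealPiece n J k ⊓ (Finset.range i).inf (fun i' => LinearMap.ker (ev (p i'))))
        = dJ k - i := by
    intro j
    induction j with
    | zero =>
      refine ⟨fun _ => 0, fun k i hi _ => ?_⟩
      interval_cases i
      haveI := hfdJ k
      rw [Finset.range_zero, Finset.inf_empty, inf_top_eq]
      simp [hdJ]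
    | succ j ih =>
      obtain ⟨p, hp⟩ := ih
      set D : Finset ℕ := (Finset.range N).filter (fun k => j + 1 ≤ c k) with hD
      have hmemD : ∀ k, j + 1 ≤ c k → k ∈ D := by
        intro k hk
        refine Finset.mem_filter.mpr ⟨Finset.mem_range.mpr ?_, hk⟩
        by_contra hkN
        have := hcN k (by omega)
        omega
      have hUk : ∀ k ∈ D, ∃ u : MvPolynomial (Fin (n + 1)) ℂ,
          u ∈ idealPiece n J k ⊓ (Finset.range j).inf (fun i' => LinearMap.ker (ev (p i')))
            ∧ u ≠ 0 := by
        intro k hk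
        have hck : j + 1 ≤ c k := (Finset.mem_filter.mp hk).2
        have hrank := hp k j le_rfl (by omega)
        haveI : FiniteDimensional ℂ
            ↥(idealPiece n J k ⊓ (Finset.range j).inf (fun i' => LinearMap.ker (ev (p i')))) :=
          fdOfLe (le_trans inf_le_left (hJle k))
        have hpos : (idealPiece n J k ⊓ (Finset.range j).inf
            (fun i' => LinearMap.ker (ev (p i')))) ≠ ⊥ := by
          intro hbot
          rw [hbot, finrank_bot] at hrank
          have := hcdJ k
          omega
        obtain ⟨u, hu, hune⟩ := Submodule.exists_mem_ne_zero_of_ne_bot hpos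
        exact ⟨u, hu, hune⟩
      set G : {k // k ∈ D} → MvPolynomial (Fin (n + 1)) ℂ :=
        fun x => (hUk x.1 x.2).choose with hG
      have hgne : (∏ x ∈ D.attach, G x) ≠ 0 :=
        Finset.prod_ne_zero_iff.mpr (fun x _ => (hUk x.1 x.2).choose_spec.2)
      obtain ⟨q, hq⟩ := exists_eval_ne_zero hgne
      have hqall : ∀ k (hk : k ∈ D), eval q (G ⟨k, hk⟩) ≠ 0 := by
        intro k hk
        have hmp : eval q (∏ x ∈ D.attach, G x) = ∏ x ∈ D.attach, eval q (G x) :=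
          map_prod _ _ _
        rw [hmp] at hq
        exact Finset.prod_ne_zero_iff.mp hq ⟨k, hk⟩ (Finset.mem_attach _ _)
      refine ⟨Function.update p j q, ?_⟩
      intro k i hij hick
      by_cases hi : i ≤ j
      · have hagree : ∀ i' ∈ Finset.range i,
            LinearMap.ker (ev (Function.update p j q i')) = LinearMap.ker (ev (p i')) := by
          intro i' hi'
          have hne : i' ≠ j := by
            have := Finset.mem_range.mp hi'
            omega
          rw [Function.update_of_ne hne]
        rw [Finset.inf_congr rfl hagree]
        exact hp k i hi hick
      · have hi1 : i = j + 1 := by omega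
        subst hi1
        have hkD : k ∈ D := hmemD k hick
        rw [Finset.range_add_one, Finset.inf_insert]
        have hagree : ∀ i' ∈ Finset.range j,
            LinearMap.ker (ev (Function.update p j q i')) = LinearMap.ker (ev (p i')) := by
          intro i' hi'
          have hne : i' ≠ j := by
            have := Finset.mem_range.mp hi'
            omega
          rw [Function.update_of_ne hne]
        rw [Finset.inf_congr rfl hagree, Function.update_self]
        rw [inf_comm (LinearMap.ker (ev q)) _, ← inf_assoc]
        set W := idealPiece n J k ⊓ (Finset.range j).inf (fun i' => LinearMap.ker (ev (p i')))
          with hW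
        haveI : FiniteDimensional ℂ ↥W := fdOfLe (le_trans inf_le_left (hJle k))
        have hWrank : finrank ℂ ↥W = dJ k - j := hp k j le_rfl (by omega)
        have hGW : G ⟨k, hkD⟩ ∈ W := (hUk k hkD).choose_spec.1
        have hGev : ev q (G ⟨k, hkD⟩) ≠ 0 := by
          rw [ev_apply]
          exact hqall k hkD
        have := finrank_inf_ker W (ev q) hGW hGev
        have hd := hcdJ k
        omega
  obtain ⟨p, hp⟩ := key r
  -- the graded pieces of the new ideal
  set V : ℕ → Submodule ℂ (MvPolynomial (Fin (n + 1)) ℂ) := fun k =>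
    idealPiece n J k ⊓ (Finset.range (c k)).inf (fun i' => LinearMap.ker (ev (p i'))) with hV
  have hVJ : ∀ k, V k ≤ idealPiece n J k := fun k => inf_le_left
  have hVS : ∀ k, V k ≤ Sk n k := fun k => le_trans (hVJ k) (hJle k)
  have hVrank : ∀ k, finrank ℂ ↥(V k) = dJ k - c k := fun k => hp k (c k) (hcr k) le_rfl
  have hVbot : ∀ k, dS k ≤ r → V k = ⊥ := by
    intro k hk
    haveI : FiniteDimensional ℂ ↥(V k) := fdOfLe (hVS k)
    have h1 := hVrank k
    have h2 := hdJle k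
    have h3 : c k = dJ k := by
      simp only [hc]
      omega
    rw [h3] at h1
    refine Submodule.finrank_eq_zero.mp ?_
    omega
  have hVfull : ∀ k, N ≤ k → V k = idealPiece n J k := by
    intro k hk
    simp only [hV, hcN k hk]
    rw [Finset.range_zero, Finset.inf_empty, inf_top_eq]
  have hVmul : ∀ (j k : ℕ) (g f : MvPolynomial (Fin (n + 1)) ℂ),
      g ∈ Sk n j → f ∈ V k → g * f ∈ V (j + k) := by
    intro j k g f hg hf
    rcases le_or_gt (dS k) r with hdsr | hdsr
    · rw [hVbot k hdsr, Submodule.mem_bot] at hf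
      subst hf
      rw [mul_zero]
      exact Submodule.zero_mem _
    · have hfP := hVJ k hf
      have hfJ : f ∈ J := (Submodule.mem_inf.mp hfP).1
      have hfS : f ∈ Sk n k := (Submodule.mem_inf.mp hfP).2
      refine Submodule.mem_inf.mpr ⟨?_, ?_⟩
      · refine Submodule.mem_inf.mpr ⟨?_, ?_⟩
        · exact Ideal.mul_mem_left _ _ hfJ
        · exact (mem_homogeneousSubmodule _ _).mpr
            (((mem_homogeneousSubmodule _ _).mp hg).mul ((mem_homogeneousSubmodule _ _).mp hfS))
      · rw [Submodule.mem_finsetInf]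
        intro i hi
        have hi' : i < c (j + k) := Finset.mem_range.mp hi
        have hle : c (j + k) ≤ c k := hcmono k (j + k) (by omega) hdsr
        have hfker : f ∈ LinearMap.ker (ev (p i)) := by
          have h2 := (Submodule.mem_inf.mp hf).2
          rw [Submodule.mem_finsetInf] at h2
          exact h2 i (Finset.mem_range.mpr (by omega))
        rw [LinearMap.mem_ker] at hfker ⊢
        rw [ev_mul, hfker, mul_zero]
  -- the ideal I
  set I : Ideal (MvPolynomial (Fin (n + 1)) ℂ) :=
    { carrier := {f | ∀ m, homogeneousComponent m f ∈ V m}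
      add_mem' := by
        intro a b ha hb m
        rw [map_add]
        exact Submodule.add_mem _ (ha m) (hb m)
      zero_mem' := by
        intro m
        rw [map_zero]
        exact Submodule.zero_mem _
      smul_mem' := by
        intro g f hf
        have : g • f = g * f := rfl
        rw [Set.mem_setOf_eq, this]
        refine comp_mul_mem V g f (fun j i => ?_)
        exact hVmul j i _ _ (homogeneousComponent_mem j g) (hf i) } with hI
  have hmemI : ∀ f : MvPolynomial (Fin (n + 1)) ℂ,
      f ∈ I ↔ ∀ m, homogeneousComponent m f ∈ V m := fun f => Iff.rfl
  have hVI : ∀ k, V k ≤ Submodule.restrictScalars ℂ I := by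
    intro k f hf m
    rw [homogeneousComponent_of_mem (hVS k hf)]
    split_ifs with hmk
    · subst hmk; exact hf
    · exact Submodule.zero_mem _
  have hIJ : I ≤ J := by
    intro f hf
    have hrw := sum_homogeneousComponent f
    rw [← hrw]
    refine Ideal.sum_mem _ (fun m _ => ?_)
    have h1 : homogeneousComponent m f ∈ idealPiece n J m := hVJ m (hf m)
    exact (Submodule.mem_inf.mp h1).1
  have hpieceI : ∀ k, idealPiece n I k = V k := by
    intro k
    refine le_antisymm ?_ ?_
    · rintro f hf
      have hfI : f ∈ I := (Submodule.mem_inf.mp hf).1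
      have hfS : f ∈ Sk n k := (Submodule.mem_inf.mp hf).2
      have := hfI k
      rwa [homogeneousComponent_of_mem hfS, if_pos rfl] at this
    · intro f hf
      exact Submodule.mem_inf.mpr ⟨hVI k hf, hVS k hf⟩
  refine ⟨I, ?_, ?_, ?_⟩
  · -- homogeneity
    refine le_antisymm ?_ (iSup_le (fun k => inf_le_left))
    intro f hf
    have hrw := sum_homogeneousComponent f
    rw [← hrw]
    refine Submodule.sum_mem _ (fun m _ => ?_)
    refine Submodule.mem_iSup_of_mem m ?_
    rw [hpieceI m]
    exact hf m
  · -- Hilbert function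
    intro k
    have h0 : HF n I k = dS k - finrank ℂ ↥(idealPiece n I k) := rfl
    rw [h0, hpieceI k, hVrank k]
    have h1 := hdJle k
    have h2 := hler k
    have h3 := hcdJ k
    have h4 : Module.finrank ℂ ↥(homogeneousSubmodule (Fin (n + 1)) ℂ k) = dS k := rfl
    rw [h4]
    simp only [hc] at *
    omega
  · -- saturation
    ext x
    simp only [satSet, Set.mem_setOf_eq, SetLike.mem_coe]
    constructor
    · rintro ⟨k, hk⟩
      have hx : x ∈ satSet J (irrel n) := ⟨k, fun g hg => hIJ (hk g hg)⟩
      rw [hJsat] at hx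
      exact hx
    · intro hx
      refine ⟨N, fun g hg => ?_⟩
      show ∀ m, homogeneousComponent m (x * g) ∈ V m
      refine comp_mul_mem V x g (fun j i => ?_)
      rcases Nat.lt_or_ge i N with hiN | hiN
      · rw [comp_eq_zero_of_mem_irrel_pow hg i hiN, mul_zero]
        exact Submodule.zero_mem _
      · have h1 : homogeneousComponent j x ∈ idealPiece n J j := comp_mem_of_mem hJhom hx j
        have hprod : homogeneousComponent j x * homogeneousComponent i g
            ∈ idealPiece n J (j + i) := by
          refine Submodule.mem_inf.mpr ⟨?_, ?_⟩
          · exact Ideal.mul_mem_right _ _ (Submodule.mem_inf.mp h1).1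
          · exact (mem_homogeneousSubmodule _ _).mpr
              (((mem_homogeneousSubmodule _ _).mp (Submodule.mem_inf.mp h1).2).mul
                ((mem_homogeneousSubmodule _ _).mp (homogeneousComponent_mem i g)))
        rw [hVfull (j + i) (by omega)]
        exact hprod
end
end

section
/- Let n ≥ 2 and r ≥ 4, and let S = ℂ[α_0,…,α_n] with the standard grading and 𝔪 = (α_0,…,α_n). Then there exists a homogeneous ideal I ⊆ S such that dim_ℂ (S/I)_k = min(dim_ℂ S_k, r) for every k ≥ 0, the saturation (I : 𝔪^∞) equals (α_0, …, α_{n−2}, α_{n−1}^r), and α_0^{r−2} ∉ I. -/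
open MvPolynomial

noncomputable section

namespace Nonslip

open Finsupp Finset

open scoped Classical

abbrev Ex (n : ℕ) := Fin (n + 1) →₀ ℕ

variable (n r : ℕ)

def lastI : Fin (n + 1) := ⟨n, by omega⟩

def prevI : Fin (n + 1) := ⟨n - 1, by omega⟩

lemma lastI_val : (lastI n : ℕ) = n := rfl

lemma prevI_val : (prevI n : ℕ) = n - 1 := rfl

/-! ### degree helpers -/

lemma deg_add (a b : Ex n) : (a + b).degree = a.degree + b.degree := by
  simp [degree_eq_weight_one]

lemma deg_single (i : Fin (n + 1)) (m : ℕ) : (Finsupp.single i m).degree = m := by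
  rcases eq_or_ne m 0 with h | h
  · simp [h, Finsupp.degree]
  · exact Finsupp.degree_single _ _

lemma deg_mono {a b : Ex n} (h : a ≤ b) : a.degree ≤ b.degree := by
  have h1 : a + (b - a) = b := add_tsub_cancel_of_le h
  have h2 := congrArg Finsupp.degree h1
  rw [deg_add] at h2
  omega

lemma deg_strict {a b : Ex n} (h : a ≤ b) (hne : a ≠ b) : a.degree < b.degree := by
  have h1 : a + (b - a) = b := add_tsub_cancel_of_le h
  have h2 : (b - a) ≠ 0 := by
    intro h0; apply hne; rw [← h1, h0, add_zero]
  have h3 := congrArg Finsupp.degree h1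
  rw [deg_add] at h3
  have h4 : (b - a).degree ≠ 0 := fun hh => h2 ((Finsupp.degree_eq_zero_iff _).1 hh)
  omega

lemma erase_eq_self {i : Fin (n + 1)} {a : Ex n} (h : a i = 0) : a.erase i = a := by
  ext j
  rw [Finsupp.erase_apply]
  split
  · next hj => rw [hj, h]
  · rfl

lemma deg_erase (i : Fin (n + 1)) (a : Ex n) : (a.erase i).degree + a i = a.degree := by
  conv_rhs => rw [← Finsupp.single_add_erase i a]
  rw [deg_add, deg_single]
  ring

lemma single_of_le {i : Fin (n + 1)} {j : ℕ} {v : Ex n}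
    (h : v ≤ Finsupp.single i j) : v = Finsupp.single i (v i) := by
  ext l
  rcases eq_or_ne l i with rfl | hl
  · simp
  · have := (Finsupp.le_def.1 h) l
    rw [Finsupp.single_apply, if_neg (fun hh => hl hh.symm)] at this ⊢
    omega

lemma deg_single_self {i : Fin (n + 1)} {v : Ex n}
    (h : v = Finsupp.single i (v i)) : v.degree = v i := by
  conv_lhs => rw [h]
  rw [deg_single]

/-! ### the monomial finsets -/

def Tk (k : ℕ) : Finset (Ex n) := Finset.finsuppAntidiag Finset.univ k

lemma mem_Tk {k : ℕ} {a : Ex n} : a ∈ Tk n k ↔ a.degree = k := by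
  rw [Tk, Finset.mem_finsuppAntidiag']
  constructor
  · rintro ⟨h, -⟩; rw [← h]; rfl
  · intro h; exact ⟨h, Finset.subset_univ _⟩

lemma card_Tk_mono : Monotone (fun k => (Tk n k).card) := by
  apply monotone_nat_of_le_succ
  intro k
  apply Finset.card_le_card_of_injOn (fun a => a + Finsupp.single (lastI n) 1)
  · intro a ha
    simp only [Finset.mem_coe, mem_Tk] at ha ⊢
    rw [deg_add, deg_single, ha]
  · intro a _ b _ h
    exact add_right_cancel h

def lowA (k : ℕ) : Finset (Ex n) := (Tk n k).image (fun a => a.erase (lastI n))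

lemma mem_lowA {k : ℕ} {u : Ex n} :
    u ∈ lowA n k ↔ u (lastI n) = 0 ∧ u.degree ≤ k := by
  constructor
  · intro h
    rcases Finset.mem_image.1 h with ⟨a, ha, rfl⟩
    rw [mem_Tk] at ha
    refine ⟨by simp, ?_⟩
    have := deg_erase n (lastI n) a
    omega
  · rintro ⟨h0, hle⟩
    refine Finset.mem_image.2 ⟨u + Finsupp.single (lastI n) (k - u.degree), ?_, ?_⟩
    · rw [mem_Tk, deg_add, deg_single]; omega
    · rw [Finsupp.erase_add, erase_eq_self n h0, Finsupp.erase_single, add_zero]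

lemma card_lowA (k : ℕ) : (lowA n k).card = (Tk n k).card := by
  apply Finset.card_image_of_injOn
  intro a ha b hb h
  replace h : a.erase (lastI n) = b.erase (lastI n) := h
  rw [Finset.mem_coe, mem_Tk] at ha hb
  have da := deg_erase n (lastI n) a
  have db := deg_erase n (lastI n) b
  have hv : a (lastI n) = b (lastI n) := by
    rw [h] at da; omega
  calc a = Finsupp.single (lastI n) (a (lastI n)) + a.erase (lastI n) :=
        (Finsupp.single_add_erase _ a).symm
    _ = Finsupp.single (lastI n) (b (lastI n)) + b.erase (lastI n) := by rw [h, hv]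
    _ = b := Finsupp.single_add_erase _ b

def Ub (m : ℕ) : Finset (Ex n) :=
  (Finset.range (m + 1)).image (fun j => Finsupp.single (prevI n) j)

lemma mem_Ub {m : ℕ} {u : Ex n} :
    u ∈ Ub n m ↔ ∃ j, j ≤ m ∧ u = Finsupp.single (prevI n) j := by
  rw [Ub, Finset.mem_image]
  constructor
  · rintro ⟨j, hj, rfl⟩; exact ⟨j, by have := Finset.mem_range.1 hj; omega, rfl⟩
  · rintro ⟨j, hj, rfl⟩; exact ⟨j, Finset.mem_range.2 (by omega), rfl⟩

lemma card_Ub (m : ℕ) : (Ub n m).card = m + 1 := by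
  rw [Ub, Finset.card_image_of_injective _ (Finsupp.single_injective _), Finset.card_range]

/-! ### index facts -/

lemma prev_ne_last (hn : 2 ≤ n) : prevI n ≠ lastI n := by
  intro h
  rw [Fin.ext_iff, prevI_val, lastI_val] at h
  omega

lemma zero_ne_prev (hn : 2 ≤ n) : (0 : Fin (n + 1)) ≠ prevI n := by
  intro h
  rw [Fin.ext_iff, prevI_val, Fin.val_zero] at h
  omega

lemma zero_ne_last (hn : 2 ≤ n) : (0 : Fin (n + 1)) ≠ lastI n := by
  intro h
  rw [Fin.ext_iff, lastI_val, Fin.val_zero] at h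
  omega

lemma fin_cases3 (hn : 2 ≤ n) (i : Fin (n + 1)) :
    (i : ℕ) ≤ n - 2 ∨ i = prevI n ∨ i = lastI n := by
  rcases i with ⟨v, hv⟩
  simp only [Fin.ext_iff, prevI_val, lastI_val]
  omega

/-! ### `T_{r-2}` is big -/

lemma card_T_big (hn : 2 ≤ n) (hr : 4 ≤ r) : r < (Tk n (r - 2)).card := by
  classical
  set f : ℕ → Ex n := fun j => Finsupp.single (prevI n) j + Finsupp.single (lastI n) (r - 2 - j)
    with hf
  set e1 : Ex n := Finsupp.single 0 1 + Finsupp.single (lastI n) (r - 3) with he1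
  set e2 : Ex n := Finsupp.single 0 1 + Finsupp.single (prevI n) 1 +
    Finsupp.single (lastI n) (r - 4) with he2
  have hpl := prev_ne_last n hn
  have h0p := zero_ne_prev n hn
  have h0l := zero_ne_last n hn
  have hlp := hpl.symm
  have hp0 := h0p.symm
  have hl0 := h0l.symm
  have hf0 : ∀ j, f j 0 = 0 := by
    intro j
    simp [hf, Finsupp.single_apply, hp0, hl0, h0p, h0l]
  have he10 : e1 0 = 1 := by
    simp [he1, Finsupp.single_apply, h0l, hl0]
  have he20 : e2 0 = 1 := by
    simp [he2, Finsupp.single_apply, h0l, hl0, h0p, hp0]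
  have he1p : e1 (prevI n) = 0 := by
    simp [he1, Finsupp.single_apply, h0p, hp0, hpl, hlp]
  have he2p : e2 (prevI n) = 1 := by
    simp [he2, Finsupp.single_apply, h0p, hp0, hpl, hlp]
  have hfp : ∀ j, f j (prevI n) = j := by
    intro j
    simp [hf, Finsupp.single_apply, hpl, hlp]
  set S : Finset (Ex n) :=
    insert e1 (insert e2 ((Finset.range (r - 1)).image f)) with hS
  have hsub : S ⊆ Tk n (r - 2) := by
    intro a ha
    rw [hS, Finset.mem_insert, Finset.mem_insert] at ha
    rcases ha with rfl | rfl | ha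
    · rw [mem_Tk, he1, deg_add, deg_single, deg_single]; omega
    · rw [mem_Tk, he2, deg_add, deg_add, deg_single, deg_single, deg_single]; omega
    · rcases Finset.mem_image.1 ha with ⟨j, hj, rfl⟩
      rw [Finset.mem_range] at hj
      rw [mem_Tk, hf]
      rw [deg_add, deg_single, deg_single]
      omega
  have hcard : S.card = r + 1 := by
    have hinj : Set.InjOn f ↑(Finset.range (r - 1)) := by
      intro x _ y _ hxy
      have := congrArg (fun v => v (prevI n)) hxy
      simpa [hfp] using this
    have h2 : e2 ∉ (Finset.range (r - 1)).image f := by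
      intro h
      rcases Finset.mem_image.1 h with ⟨j, _, hj⟩
      have := congrArg (fun v => v 0) hj
      simp only [hf0, he20] at this
      omega
    have h1 : e1 ∉ insert e2 ((Finset.range (r - 1)).image f) := by
      intro h
      rcases Finset.mem_insert.1 h with h | h
      · have := congrArg (fun v => v (prevI n)) h
        simp only [he1p, he2p] at this
        omega
      · rcases Finset.mem_image.1 h with ⟨j, _, hj⟩
        have := congrArg (fun v => v 0) hj
        simp only [hf0, he10] at this
        omega
    rw [hS, Finset.card_insert_of_notMem h1, Finset.card_insert_of_notMem h2,
      Finset.card_image_of_injOn hinj, Finset.card_range]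
    omega
  have := Finset.card_le_card hsub
  omega

/-! ### the threshold degree -/

def dd : ℕ := sInf {k | r < (Tk n k).card}

lemma dd_mem (hn : 2 ≤ n) (hr : 4 ≤ r) : r < (Tk n (dd n r)).card := by
  have hne : {k | r < (Tk n k).card}.Nonempty := ⟨r - 2, card_T_big n r hn hr⟩
  exact Nat.sInf_mem hne

lemma dd_le_sub (hn : 2 ≤ n) (hr : 4 ≤ r) : dd n r ≤ r - 2 :=
  Nat.sInf_le (card_T_big n r hn hr)

lemma dd_le_of_big {k : ℕ} (h : r < (Tk n k).card) : dd n r ≤ k := Nat.sInf_le h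

lemma low_of_lt_dd {k : ℕ} (h : k < dd n r) : (Tk n k).card ≤ r := by
  by_contra h'
  exact absurd (dd_le_of_big n r (not_le.1 h')) (by omega)

lemma card_T_zero : (Tk n 0).card = 1 := by
  have : Tk n 0 = {0} := by
    ext a
    rw [mem_Tk, Finset.mem_singleton, Finsupp.degree_eq_zero_iff]
  rw [this, Finset.card_singleton]

lemma dd_pos (hn : 2 ≤ n) (hr : 4 ≤ r) : 1 ≤ dd n r := by
  by_contra h
  have h0 : dd n r = 0 := by omega
  have := dd_mem n r hn hr
  rw [h0, card_T_zero] at this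
  omega

lemma big_of_ge (hn : 2 ≤ n) (hr : 4 ≤ r) {k : ℕ} (h : r - 2 ≤ k) : r < (Tk n k).card :=
  lt_of_lt_of_le (card_T_big n r hn hr) (card_Tk_mono n h)

/-! ### existence of a compatible enumeration -/

lemma exists_chainList (F : Finset (Ex n))
    (hF : ∀ u ∈ F, ∀ v : Ex n, v ≤ u → v ≠ u →
      (¬ ∃ m, v = Finsupp.single (prevI n) m) → v ∈ F) :
    ∃ L : List (Ex n), L.Nodup ∧ L.toFinset = F ∧
      ∀ m, ∀ u ∈ L.take m, ∀ v : Ex n, v ≤ u → v ≠ u →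
        (∃ mm, v = Finsupp.single (prevI n) mm) ∨ v ∈ L.take m := by
  classical
  induction F using Finset.strongInduction with
  | _ F ih =>
    rcases F.eq_empty_or_nonempty with rfl | hne
    · exact ⟨[], by simp, by simp, by simp⟩
    · obtain ⟨u, hu, hmax⟩ := F.exists_max_image Finsupp.degree hne
      have hsub : F.erase u ⊂ F := Finset.erase_ssubset hu
      have hF' : ∀ w ∈ F.erase u, ∀ v : Ex n, v ≤ w → v ≠ w →
          (¬ ∃ m, v = Finsupp.single (prevI n) m) → v ∈ F.erase u := by
        intro w hw v hv hne' hns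
        have hwF := Finset.mem_of_mem_erase hw
        have hvF := hF w hwF v hv hne' hns
        refine Finset.mem_erase.2 ⟨?_, hvF⟩
        intro hvu
        have h1 : v.degree < w.degree := deg_strict n hv hne'
        have h2 := hmax w hwF
        rw [hvu] at h1
        omega
      obtain ⟨L', hnd, htf, hcl⟩ := ih _ hsub hF'
      have huL' : u ∉ L' := by
        intro h
        have : u ∈ F.erase u := htf ▸ List.mem_toFinset.2 h
        exact (Finset.notMem_erase u F) this
      refine ⟨L' ++ [u], ?_, ?_, ?_⟩
      · rw [List.nodup_append]
        exact ⟨hnd, List.nodup_singleton u, by simp; intro a ha hau; subst hau; exact huL' ha⟩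
      · ext x
        simp only [List.toFinset_append, htf, List.toFinset_cons, List.toFinset_nil,
          LawfulSingleton.insert_empty_eq, Finset.mem_union, Finset.mem_erase, Finset.mem_singleton]
        constructor
        · rintro (⟨-, h⟩ | rfl)
          exacts [h, hu]
        · intro h
          by_cases hx : x = u
          exacts [Or.inr hx, Or.inl ⟨hx, h⟩]
      · intro m w hw v hv hvw
        by_cases hm : m ≤ L'.length
        · rw [List.take_append_of_le_length hm] at hw ⊢
          exact hcl m w hw v hv hvw
        · have hall : (L' ++ [u]).take m = L' ++ [u] :=
            List.take_of_length_le (by simp; omega)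
          rw [hall] at hw ⊢
          rcases List.mem_append.1 hw with hw' | hw'
          · have h3 := hcl L'.length w (by rwa [List.take_length]) v hv hvw
            rcases h3 with h | h
            · exact Or.inl h
            · rw [List.take_length] at h
              exact Or.inr (List.mem_append.2 (Or.inl h))
          · have hwu : w = u := by simpa using hw'
            subst hwu
            by_cases hs : ∃ mm, v = Finsupp.single (prevI n) mm
            · exact Or.inl hs
            · have hvF := hF w hu v hv hvw hs
              have hvE : v ∈ F.erase w := Finset.mem_erase.2 ⟨hvw, hvF⟩
              rw [← htf] at hvE
              exact Or.inr (List.mem_append.2 (Or.inl (List.mem_toFinset.1 hvE)))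

/-! ### the scope and the enumeration -/

def F0 : Finset (Ex n) :=
  (lowA n (dd n r)) \ (Ub n (dd n r) ∪ {Finsupp.single 0 (dd n r)})

lemma hF0 : ∀ u ∈ F0 n r, ∀ v : Ex n, v ≤ u → v ≠ u →
    (¬ ∃ m, v = Finsupp.single (prevI n) m) → v ∈ F0 n r := by
  intro u hu v hv hne hns
  rw [F0, Finset.mem_sdiff] at hu ⊢
  obtain ⟨hul, _⟩ := hu
  rw [mem_lowA] at hul
  have hstrict := deg_strict n hv hne
  have hvlast : v (lastI n) = 0 := by
    have := (Finsupp.le_def.1 hv) (lastI n)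
    omega
  refine ⟨mem_lowA n |>.2 ⟨hvlast, by omega⟩, ?_⟩
  intro hmem
  rcases Finset.mem_union.1 hmem with h | h
  · rcases (mem_Ub n).1 h with ⟨j, _, hj⟩
    exact hns ⟨j, hj⟩
  · rw [Finset.mem_singleton] at h
    have : v.degree = dd n r := by rw [h, deg_single]
    omega

def Lenum : List (Ex n) := (exists_chainList n (F0 n r) (hF0 n r)).choose

lemma Lenum_spec : (Lenum n r).Nodup ∧ (Lenum n r).toFinset = F0 n r ∧
    ∀ m, ∀ u ∈ (Lenum n r).take m, ∀ v : Ex n, v ≤ u → v ≠ u →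
      (∃ mm, v = Finsupp.single (prevI n) mm) ∨ v ∈ (Lenum n r).take m :=
  (exists_chainList n (F0 n r) (hF0 n r)).choose_spec

lemma sub_mem_lowA (hn : 2 ≤ n) (hr : 4 ≤ r) :
    Ub n (dd n r) ∪ {Finsupp.single 0 (dd n r)} ⊆ lowA n (dd n r) := by
  intro a ha
  rcases Finset.mem_union.1 ha with h | h
  · rcases (mem_Ub n).1 h with ⟨j, hj, rfl⟩
    rw [mem_lowA]
    refine ⟨?_, by rw [deg_single]; omega⟩
    rw [Finsupp.single_apply, if_neg (prev_ne_last n hn)]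
  · rw [Finset.mem_singleton] at h
    subst h
    rw [mem_lowA]
    refine ⟨?_, by rw [deg_single]⟩
    rw [Finsupp.single_apply, if_neg (zero_ne_last n hn)]

lemma single0_not_Ub (hn : 2 ≤ n) {k m : ℕ} (hk : 1 ≤ k) :
    Finsupp.single (0 : Fin (n + 1)) k ∉ Ub n m := by
  intro h
  rcases (mem_Ub n).1 h with ⟨j, _, hj⟩
  have h1 := DFunLike.congr_fun hj (0 : Fin (n + 1))
  rw [Finsupp.single_apply, Finsupp.single_apply, if_pos rfl,
    if_neg (Ne.symm (zero_ne_prev n hn))] at h1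
  omega

lemma card_F0 (hn : 2 ≤ n) (hr : 4 ≤ r) :
    (F0 n r).card + (dd n r + 2) = (Tk n (dd n r)).card := by
  have h1 : (Ub n (dd n r) ∪ {Finsupp.single 0 (dd n r)}).card = dd n r + 2 := by
    rw [Finset.union_comm, ← Finset.insert_eq,
      Finset.card_insert_of_notMem (single0_not_Ub n hn (dd_pos n r hn hr)), card_Ub]
  rw [F0, Finset.card_sdiff_of_subset (sub_mem_lowA n r hn hr), h1, card_lowA]
  have h2 := Finset.card_le_card (sub_mem_lowA n r hn hr)
  rw [h1, card_lowA] at h2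
  omega

lemma Lenum_length (hn : 2 ≤ n) (hr : 4 ≤ r) :
    (Lenum n r).length + (dd n r + 2) = (Tk n (dd n r)).card := by
  have h := Lenum_spec n r
  rw [← List.toFinset_card_of_nodup h.1, h.2.1]
  exact card_F0 n r hn hr

/-! ### the staircase -/

def Gk (k : ℕ) : Finset (Ex n) := ((Lenum n r).take (r - 2 - k)).toFinset

def Aset (k : ℕ) : Finset (Ex n) :=
  if (Tk n k).card ≤ r then lowA n k
  else if k ≤ r - 2 then (Ub n k ∪ {Finsupp.single 0 k}) ∪ Gk n r k
  else Ub n (r - 1)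

lemma take_subset_take {α : Type*} (L : List α) {m m' : ℕ} (h : m ≤ m') :
    L.take m ⊆ L.take m' := by
  intro x hx
  have h2 : L.take m = (L.take m').take m := by rw [List.take_take, min_eq_left h]
  rw [h2] at hx
  exact List.take_subset _ _ hx

lemma mem_F0_of_take {m : ℕ} {u : Ex n} (h : u ∈ ((Lenum n r).take m).toFinset) :
    u ∈ F0 n r := by
  have h2 := Lenum_spec n r
  rw [← h2.2.1]
  exact List.mem_toFinset.2 (List.take_subset _ _ (List.mem_toFinset.1 h))

lemma F0_last_deg {u : Ex n} (h : u ∈ F0 n r) :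
    u (lastI n) = 0 ∧ u.degree ≤ dd n r := by
  rw [F0, Finset.mem_sdiff, mem_lowA] at h
  exact h.1

/-- helper: pure powers of `α_{n-1}` belong to every relevant level. -/
lemma mem_Aset_single_prev (hn : 2 ≤ n) (hr : 4 ≤ r) {k j : ℕ}
    (hjk : j ≤ k) (hjr : j ≤ r - 1) :
    Finsupp.single (prevI n) j ∈ Aset n r k := by
  rw [Aset]
  split_ifs with h1 h2
  · rw [mem_lowA]
    exact ⟨by rw [Finsupp.single_apply, if_neg (prev_ne_last n hn)], by rw [deg_single]; exact hjk⟩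
  · exact Finset.mem_union_left _ (Finset.mem_union_left _ ((mem_Ub n).2 ⟨j, hjk, rfl⟩))
  · exact (mem_Ub n).2 ⟨j, hjr, rfl⟩

lemma mem_Aset_single0 (hn : 2 ≤ n) (hr : 4 ≤ r) {k : ℕ} (hk : k ≤ r - 2) :
    Finsupp.single (0 : Fin (n + 1)) k ∈ Aset n r k := by
  by_cases h1 : (Tk n k).card ≤ r
  · rw [Aset, if_pos h1, mem_lowA]
    exact ⟨by rw [Finsupp.single_apply, if_neg (zero_ne_last n hn)], by rw [deg_single]⟩
  · rw [Aset, if_neg h1, if_pos hk]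
    exact Finset.mem_union_left _ (Finset.mem_union_right _ (Finset.mem_singleton_self _))

lemma mem_Aset_of_take (hn : 2 ≤ n) (hr : 4 ≤ r) {k m : ℕ} {u : Ex n}
    (hu : u ∈ ((Lenum n r).take m).toFinset) (hm : m ≤ r - 2 - k)
    (hd : u.degree ≤ k) : u ∈ Aset n r k := by
  have hF := F0_last_deg n r (mem_F0_of_take n r hu)
  rw [Aset]
  split_ifs with h1 h2
  · rw [mem_lowA]
    exact ⟨hF.1, hd⟩
  · refine Finset.mem_union_right _ ?_
    rw [Gk]
    exact List.mem_toFinset.2 (take_subset_take _ hm (List.mem_toFinset.1 hu))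
  · exfalso
    have : r - 2 - k = 0 := by omega
    rw [this] at hm
    interval_cases m
    simp at hu

/-! ### cardinality of the staircase levels -/

lemma card_Aset (hn : 2 ≤ n) (hr : 4 ≤ r) (k : ℕ) :
    (Aset n r k).card = min (Tk n k).card r := by
  rw [Aset]
  split_ifs with h1 h2
  · rw [card_lowA, min_eq_left h1]
  · -- middle region
    have hddk : dd n r ≤ k := dd_le_of_big n r (not_le.1 h1)
    have hdd1 : 1 ≤ dd n r := dd_pos n r hn hr
    have hlen := Lenum_length n r hn hr
    have hdmem := dd_mem n r hn hr
    -- card of Gk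
    have hGcard : (Gk n r k).card = r - 2 - k := by
      rw [Gk, List.toFinset_card_of_nodup (List.Nodup.sublist (List.take_sublist _ _)
        (Lenum_spec n r).1), List.length_take]
      omega
    have hG_F0 : ∀ u ∈ Gk n r k, u ∈ F0 n r := fun u hu => mem_F0_of_take n r hu
    have hdisj1 : Disjoint (Ub n k ∪ {Finsupp.single 0 k}) (Gk n r k) := by
      rw [Finset.disjoint_right]
      intro u huG huU
      have hF0u := hG_F0 u huG
      have hld := F0_last_deg n r hF0u
      rw [F0, Finset.mem_sdiff] at hF0u
      apply hF0u.2
      rcases Finset.mem_union.1 huU with h | h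
      · rcases (mem_Ub n).1 h with ⟨j, hj, rfl⟩
        refine Finset.mem_union_left _ ((mem_Ub n).2 ⟨j, ?_, rfl⟩)
        have := deg_single n (prevI n) j
        omega
      · rw [Finset.mem_singleton] at h
        subst h
        have := deg_single n (0 : Fin (n + 1)) k
        have hk_dd : k = dd n r := by omega
        subst hk_dd
        exact Finset.mem_union_right _ (Finset.mem_singleton_self _)
    have hdisj2 : Disjoint (Ub n k) ({Finsupp.single (0 : Fin (n+1)) k} : Finset (Ex n)) := by
      rw [Finset.disjoint_right]
      intro u hu
      rw [Finset.mem_singleton] at hu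
      subst hu
      exact single0_not_Ub n hn (by omega)
    rw [Finset.card_union_of_disjoint hdisj1, Finset.card_union_of_disjoint hdisj2,
      card_Ub, Finset.card_singleton, hGcard, min_eq_right (by omega)]
    omega
  · rw [card_Ub, min_eq_right (by omega)]
    omega

/-! ### staircase steps -/

lemma stepA_same (hn : 2 ≤ n) (hr : 4 ≤ r) {k : ℕ} {u : Ex n}
    (h : u ∈ Aset n r (k + 1)) (hd : u.degree ≤ k) : u ∈ Aset n r k := by
  rw [Aset] at h
  split_ifs at h with h1 h2
  · -- k+1 low, so k low
    have hlow : (Tk n k).card ≤ r := le_trans (card_Tk_mono n (Nat.le_succ k)) h1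
    rw [Aset, if_pos hlow, mem_lowA]
    rw [mem_lowA] at h
    exact ⟨h.1, hd⟩
  · rcases Finset.mem_union.1 h with h' | h'
    · rcases Finset.mem_union.1 h' with h'' | h''
      · rcases (mem_Ub n).1 h'' with ⟨j, hj, rfl⟩
        rw [deg_single] at hd
        exact mem_Aset_single_prev n r hn hr hd (by omega)
      · rw [Finset.mem_singleton] at h''
        subst h''
        rw [deg_single] at hd
        omega
    · exact mem_Aset_of_take n r hn hr h' (by omega) hd
  · rcases (mem_Ub n).1 h with ⟨j, hj, rfl⟩
    rw [deg_single] at hd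
    exact mem_Aset_single_prev n r hn hr hd hj

lemma stepA_pred (hn : 2 ≤ n) (hr : 4 ≤ r) {k : ℕ} {u v : Ex n}
    (h : u ∈ Aset n r (k + 1)) (hv : v ≤ u) (hdeg : v.degree + 1 = u.degree) :
    v ∈ Aset n r k := by
  have hvne : v ≠ u := by
    intro hh; rw [hh] at hdeg; omega
  rw [Aset] at h
  split_ifs at h with h1 h2
  · -- k+1 low ⇒ k low
    have hlow : (Tk n k).card ≤ r := le_trans (card_Tk_mono n (Nat.le_succ k)) h1
    rw [mem_lowA] at h
    rw [Aset, if_pos hlow, mem_lowA]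
    constructor
    · have := (Finsupp.le_def.1 hv) (lastI n)
      omega
    · omega
  · -- k+1 middle
    rcases Finset.mem_union.1 h with h' | h'
    · rcases Finset.mem_union.1 h' with h'' | h''
      · rcases (mem_Ub n).1 h'' with ⟨j, hj, rfl⟩
        have hveq := single_of_le n hv
        have hvd := deg_single_self n hveq
        have hud := deg_single n (prevI n) j
        rw [hveq]
        exact mem_Aset_single_prev n r hn hr (by omega) (by omega)
      · rw [Finset.mem_singleton] at h''
        subst h''
        have hveq := single_of_le n hv
        have hvd := deg_single_self n hveq
        have hud := deg_single n (0 : Fin (n + 1)) (k + 1)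
        have hv0 : v 0 = k := by omega
        rw [hveq, hv0]
        exact mem_Aset_single0 n r hn hr (by omega)
    · -- u in the generic part
      have hddk1 : dd n r ≤ k + 1 := dd_le_of_big n r (not_le.1 h1)
      have hud := (F0_last_deg n r (mem_F0_of_take n r h')).2
      have hvd : v.degree ≤ k := by
        rcases Nat.lt_or_ge (dd n r) (k + 1) with hc | hc
        · omega
        · omega
      rcases (Lenum_spec n r).2.2 (r - 2 - (k + 1)) u (List.mem_toFinset.1 h') v hv hvne with
        hsing | htk
      · rcases hsing with ⟨mm, rfl⟩
        have := deg_single n (prevI n) mm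
        exact mem_Aset_single_prev n r hn hr (by omega) (by omega)
      · exact mem_Aset_of_take n r hn hr (List.mem_toFinset.2 htk) (by omega) hvd
  · -- k+1 high
    rcases (mem_Ub n).1 h with ⟨j, hj, rfl⟩
    have hveq := single_of_le n hv
    have hvd := deg_single_self n hveq
    have hud := deg_single n (prevI n) j
    rw [hveq]
    exact mem_Aset_single_prev n r hn hr (by omega) (by omega)

/-! ### the staircase as a set of exponents -/

def CC (a : Ex n) : Prop := a.erase (lastI n) ∈ Aset n r a.degree

lemma CC_add_single (hn : 2 ≤ n) (hr : 4 ≤ r) {a : Ex n} {i : Fin (n + 1)}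
    (h : CC n r (a + Finsupp.single i 1)) : CC n r a := by
  rw [CC] at h ⊢
  have hdeg : (a + Finsupp.single i 1).degree = a.degree + 1 := by
    rw [deg_add, deg_single]
  rw [hdeg] at h
  by_cases hi : i = lastI n
  · subst hi
    rw [Finsupp.erase_add, Finsupp.erase_single, add_zero] at h
    apply stepA_same n r hn hr h
    have := deg_erase n (lastI n) a
    omega
  · rw [Finsupp.erase_add, Finsupp.erase_single_ne (fun hh => hi hh.symm)] at h
    apply stepA_pred n r hn hr h (le_add_of_nonneg_right zero_le)
    rw [deg_add, deg_single]

lemma CC_down (hn : 2 ≤ n) (hr : 4 ≤ r) : ∀ N (c a : Ex n), c.degree ≤ N →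
    a ≤ c → CC n r c → CC n r a := by
  intro N
  induction N with
  | zero =>
    intro c a hdc hac hcc
    have hc0 : c = 0 := by
      rw [← Finsupp.degree_eq_zero_iff]
      omega
    have ha0 : a = 0 := by
      subst hc0
      exact le_antisymm hac zero_le
    rw [ha0, ← hc0]
    exact hcc
  | succ N ih =>
    intro c a hdc hac hcc
    rcases eq_or_ne a c with rfl | hne
    · exact hcc
    · have hex : ∃ i, a i < c i := by
        by_contra hno
        push_neg at hno
        exact hne (le_antisymm hac (Finsupp.le_def.2 hno))
      obtain ⟨i, hi⟩ := hex
      have hle : Finsupp.single i 1 ≤ c := Finsupp.single_le_iff.2 (by omega)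
      set c' : Ex n := c - Finsupp.single i 1 with hc'
      have hcc' : c' + Finsupp.single i 1 = c := tsub_add_cancel_of_le hle
      have hCCc' : CC n r c' := CC_add_single n r hn hr (by rw [hcc']; exact hcc)
      have hdc' : c'.degree + 1 = c.degree := by
        have := congrArg Finsupp.degree hcc'
        rw [deg_add, deg_single] at this
        omega
      have hac' : a ≤ c' := by
        rw [Finsupp.le_def]
        intro j
        have happ : c' j = c j - (Finsupp.single i 1) j := by
          rw [hc']
          rw [Finsupp.tsub_apply]
        rcases eq_or_ne j i with rfl | hj
        · rw [happ, Finsupp.single_apply, if_pos rfl]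
          omega
        · rw [happ, Finsupp.single_apply, if_neg (fun hh => hj hh.symm)]
          have := Finsupp.le_def.1 hac j
          omega
      exact ih c' a (by omega) hac' hCCc'

lemma CC_mono (hn : 2 ≤ n) (hr : 4 ≤ r) {a c : Ex n} (h : a ≤ c) (hc : CC n r c) :
    CC n r a :=
  CC_down n r hn hr c.degree c a le_rfl h hc

/-! ### B-exponents -/

def Bexp (a : Ex n) : Prop :=
  (∀ i : Fin (n + 1), (i : ℕ) ≤ n - 2 → a i = 0) ∧ a (prevI n) ≤ r - 1

lemma Bexp_mono {a c : Ex n} (h : a ≤ c) (hc : Bexp n r c) : Bexp n r a := by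
  constructor
  · intro i hi
    have h1 := Finsupp.le_def.1 h i
    have := hc.1 i hi
    omega
  · have h1 := Finsupp.le_def.1 h (prevI n)
    have := hc.2
    omega

lemma front_ne_prev (hn : 2 ≤ n) {i : Fin (n + 1)} (hi : (i : ℕ) ≤ n - 2) : i ≠ prevI n := by
  intro h
  rw [Fin.ext_iff, prevI_val] at h
  omega

lemma front_ne_last (hn : 2 ≤ n) {i : Fin (n + 1)} (hi : (i : ℕ) ≤ n - 2) : i ≠ lastI n := by
  intro h
  rw [Fin.ext_iff, lastI_val] at h
  omega

lemma erase_of_Bexp (hn : 2 ≤ n) {a : Ex n} (h : ∀ i : Fin (n + 1), (i : ℕ) ≤ n - 2 → a i = 0) :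
    a.erase (lastI n) = Finsupp.single (prevI n) (a (prevI n)) := by
  ext i
  rw [Finsupp.erase_apply]
  rcases fin_cases3 n hn i with hi | rfl | rfl
  · rw [if_neg (front_ne_last n hn hi), h i hi, Finsupp.single_apply,
      if_neg (Ne.symm (front_ne_prev n hn hi))]
  · rw [if_neg (prev_ne_last n hn), Finsupp.single_apply, if_pos rfl]
  · rw [if_pos rfl, Finsupp.single_apply, if_neg (prev_ne_last n hn)]

lemma Bexp_CC (hn : 2 ≤ n) (hr : 4 ≤ r) {a : Ex n} (h : Bexp n r a) : CC n r a := by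
  rw [CC, erase_of_Bexp n hn h.1]
  exact mem_Aset_single_prev n r hn hr (Finsupp.le_degree _ _) h.2

lemma CC_high (hn : 2 ≤ n) (hr : 4 ≤ r) {a : Ex n} (hdeg : r - 1 ≤ a.degree) :
    CC n r a ↔ Bexp n r a := by
  constructor
  · intro h
    rw [CC] at h
    have hA : Aset n r a.degree = Ub n (r - 1) := by
      rw [Aset, if_neg, if_neg]
      · omega
      · push_neg
        exact big_of_ge n r hn hr (by omega)
    rw [hA] at h
    rcases (mem_Ub n).1 h with ⟨j, hj, hs⟩
    have happ : ∀ i : Fin (n + 1), i ≠ lastI n → a i = Finsupp.single (prevI n) j i := by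
      intro i hi
      have := congrArg (fun v => v i) hs
      simp only [Finsupp.erase_apply, if_neg hi] at this
      exact this
    constructor
    · intro i hi
      rw [happ i (front_ne_last n hn hi), Finsupp.single_apply,
        if_neg (Ne.symm (front_ne_prev n hn hi))]
    · rw [happ (prevI n) (prev_ne_last n hn), Finsupp.single_apply, if_pos rfl]
      exact hj
  · exact Bexp_CC n r hn hr

lemma Bexp_add_last (hn : 2 ≤ n) {a : Ex n} {k : ℕ} (h : Bexp n r a) :
    Bexp n r (a + Finsupp.single (lastI n) k) := by
  constructor
  · intro i hi
    rw [Finsupp.add_apply, h.1 i hi, Finsupp.single_apply,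
      if_neg (fun hh => (front_ne_last n hn hi) hh.symm)]
    omega
  · rw [Finsupp.add_apply, Finsupp.single_apply, if_neg (Ne.symm (prev_ne_last n hn)), add_zero]

    exact h.2

lemma CC_single0 (hn : 2 ≤ n) (hr : 4 ≤ r) :
    CC n r (Finsupp.single (0 : Fin (n + 1)) (r - 2)) := by
  rw [CC, Finsupp.erase_single_ne (fun hh => (zero_ne_last n hn) hh.symm), deg_single]
  exact mem_Aset_single0 n r hn hr le_rfl

/-! ### the ideal -/

def II (hn : 2 ≤ n) (hr : 4 ≤ r) : Ideal (MvPolynomial (Fin (n + 1)) ℂ) where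
  carrier := {f | ∀ a ∈ f.support, ¬ CC n r a}
  zero_mem' := by
    intro a ha
    simp at ha
  add_mem' := by
    intro f g hf hg a ha
    rcases Finset.mem_union.1 (MvPolynomial.support_add ha) with h | h
    · exact hf a h
    · exact hg a h
  smul_mem' := by
    intro c f hf a ha
    rw [smul_eq_mul] at ha
    obtain ⟨b, _, a', ha', rfl⟩ := Finset.mem_add.1 (MvPolynomial.support_mul c f ha)
    intro hcc
    exact hf a' ha' (CC_mono n r hn hr (le_add_of_nonneg_left zero_le) hcc)

lemma mem_II (hn : 2 ≤ n) (hr : 4 ≤ r) {f : MvPolynomial (Fin (n + 1)) ℂ} :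
    f ∈ II n r hn hr ↔ ∀ a ∈ f.support, ¬ CC n r a := Iff.rfl

lemma isHomog_II (hn : 2 ≤ n) (hr : 4 ≤ r) : IsHomog n (II n r hn hr) := by
  rw [IsHomog]
  apply le_antisymm
  · intro f hf
    rw [Submodule.restrictScalars_mem] at hf
    have heq : f = ∑ i ∈ Finset.range (f.totalDegree + 1), homogeneousComponent i f :=
      (sum_homogeneousComponent f).symm
    rw [heq]
    apply Submodule.sum_mem
    intro i _
    apply Submodule.mem_iSup_of_mem i
    rw [idealPiece, Submodule.mem_inf]
    constructor
    · rw [Submodule.restrictScalars_mem]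
      intro a ha
      apply hf a
      rw [MvPolynomial.mem_support_iff] at ha ⊢
      rw [coeff_homogeneousComponent] at ha
      intro hc
      rw [hc] at ha
      simp at ha
    · exact homogeneousComponent_mem i f
  · apply iSup_le
    intro k
    exact inf_le_left

/-! ### Hilbert function -/

lemma finrank_supported (s : Finset (Ex n)) :
    Module.finrank ℂ
      ↥((AddMonoidAlgebra.supported ℂ ℂ (↑s : Set (Ex n))) :
          Submodule ℂ (MvPolynomial (Fin (n + 1)) ℂ)) = s.card := by
  have h1 : Module.finrank ℂ ↥(AddMonoidAlgebra.supported ℂ ℂ (↑s : Set (Ex n))) = s.card := by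
    rw [(AddMonoidAlgebra.supportedEquivFinsupp (↑s : Set (Ex n))).finrank_eq,
      Module.finrank_finsupp_self]
    exact Fintype.card_of_finset' s (fun x => by simp)
  exact h1

lemma homog_eq_supported (k : ℕ) :
    homogeneousSubmodule (Fin (n + 1)) ℂ k = AddMonoidAlgebra.supported ℂ ℂ (↑(Tk n k) : Set (Ex n)) := by
  rw [homogeneousSubmodule_eq_finsupp_supported]
  congr 1
  ext a
  rw [Finset.mem_coe, mem_Tk]
  rfl

lemma finrank_homog (k : ℕ) :
    Module.finrank ℂ ↥(homogeneousSubmodule (Fin (n + 1)) ℂ k) = (Tk n k).card := by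
  rw [homog_eq_supported]
  exact finrank_supported n _

lemma piece_eq (hn : 2 ≤ n) (hr : 4 ≤ r) (k : ℕ) :
    idealPiece n (II n r hn hr) k =
      AddMonoidAlgebra.supported ℂ ℂ (↑((Tk n k).filter (fun a => ¬ CC n r a)) : Set (Ex n)) := by
  ext f
  rw [idealPiece, Submodule.mem_inf, Submodule.restrictScalars_mem, homog_eq_supported,
    AddMonoidAlgebra.mem_supported, AddMonoidAlgebra.mem_supported, mem_II]
  constructor
  · rintro ⟨hI, hH⟩ a ha
    rw [Finset.coe_filter, Set.mem_setOf_eq]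
    exact ⟨hH ha, hI a ha⟩
  · intro h
    constructor
    · intro a ha
      have := h ha
      rw [Finset.coe_filter, Set.mem_setOf_eq] at this
      exact this.2
    · intro a ha
      have := h ha
      rw [Finset.coe_filter, Set.mem_setOf_eq] at this
      exact Finset.mem_coe.2 this.1

lemma card_filter_CC (hn : 2 ≤ n) (hr : 4 ≤ r) (k : ℕ) :
    ((Tk n k).filter (fun a => CC n r a)).card = min (Tk n k).card r := by
  have him : (Tk n k).filter (fun a => CC n r a) =
      (Aset n r k).image (fun u => u + Finsupp.single (lastI n) (k - u.degree)) := by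
    ext a
    rw [Finset.mem_filter, Finset.mem_image, mem_Tk]
    constructor
    · rintro ⟨hdeg, hcc⟩
      rw [CC, hdeg] at hcc
      refine ⟨a.erase (lastI n), hcc, ?_⟩
      have hde := deg_erase n (lastI n) a
      have hlast : k - (a.erase (lastI n)).degree = a (lastI n) := by omega
      rw [hlast, add_comm]
      exact Finsupp.single_add_erase _ a
    · rintro ⟨u, hu, rfl⟩
      have hprops : u (lastI n) = 0 ∧ u.degree ≤ k := by
        rw [Aset] at hu
        split_ifs at hu with h1 h2
        · exact (mem_lowA n).1 hu
        · rcases Finset.mem_union.1 hu with h' | h'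
          · rcases Finset.mem_union.1 h' with h'' | h''
            · rcases (mem_Ub n).1 h'' with ⟨j, hj, rfl⟩
              rw [deg_single]
              exact ⟨by rw [Finsupp.single_apply, if_neg (prev_ne_last n hn)], hj⟩
            · rw [Finset.mem_singleton] at h''
              subst h''
              rw [deg_single]
              exact ⟨by rw [Finsupp.single_apply, if_neg (zero_ne_last n hn)], le_rfl⟩
          · have hF := F0_last_deg n r (mem_F0_of_take n r h')
            have hddk : dd n r ≤ k := dd_le_of_big n r (not_le.1 h1)
            exact ⟨hF.1, le_trans hF.2 hddk⟩
        · rcases (mem_Ub n).1 hu with ⟨j, hj, rfl⟩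
          rw [deg_single]
          have : r - 1 ≤ k := by omega
          exact ⟨by rw [Finsupp.single_apply, if_neg (prev_ne_last n hn)], by omega⟩
      have hdeg : (u + Finsupp.single (lastI n) (k - u.degree)).degree = k := by
        rw [deg_add, deg_single]
        omega
      refine ⟨hdeg, ?_⟩
      rw [CC, hdeg, Finsupp.erase_add, erase_eq_self n hprops.1, Finsupp.erase_single, add_zero]
      exact hu
  rw [him]
  rw [Finset.card_image_of_injOn, card_Aset n r hn hr]
  intro u hu v hv huv
  rw [Finset.mem_coe] at hu hv
  have hu0 : u (lastI n) = 0 := by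
    rw [Aset] at hu
    split_ifs at hu with h1 h2
    · exact ((mem_lowA n).1 hu).1
    · rcases Finset.mem_union.1 hu with h' | h'
      · rcases Finset.mem_union.1 h' with h'' | h''
        · rcases (mem_Ub n).1 h'' with ⟨j, hj, rfl⟩
          rw [Finsupp.single_apply, if_neg (prev_ne_last n hn)]
        · rw [Finset.mem_singleton] at h''
          subst h''
          rw [Finsupp.single_apply, if_neg (zero_ne_last n hn)]
      · exact (F0_last_deg n r (mem_F0_of_take n r h')).1
    · rcases (mem_Ub n).1 hu with ⟨j, hj, rfl⟩
      rw [Finsupp.single_apply, if_neg (prev_ne_last n hn)]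
  have hv0 : v (lastI n) = 0 := by
    rw [Aset] at hv
    split_ifs at hv with h1 h2
    · exact ((mem_lowA n).1 hv).1
    · rcases Finset.mem_union.1 hv with h' | h'
      · rcases Finset.mem_union.1 h' with h'' | h''
        · rcases (mem_Ub n).1 h'' with ⟨j, hj, rfl⟩
          rw [Finsupp.single_apply, if_neg (prev_ne_last n hn)]
        · rw [Finset.mem_singleton] at h''
          subst h''
          rw [Finsupp.single_apply, if_neg (zero_ne_last n hn)]
      · exact (F0_last_deg n r (mem_F0_of_take n r h')).1
    · rcases (mem_Ub n).1 hv with ⟨j, hj, rfl⟩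
      rw [Finsupp.single_apply, if_neg (prev_ne_last n hn)]
  have h3 := congrArg (fun w => w.erase (lastI n)) huv
  replace h3 : (u + Finsupp.single (lastI n) (k - u.degree)).erase (lastI n) =
      (v + Finsupp.single (lastI n) (k - v.degree)).erase (lastI n) := h3
  rw [Finsupp.erase_add, Finsupp.erase_add, erase_eq_self n hu0, erase_eq_self n hv0,
    Finsupp.erase_single, Finsupp.erase_single, add_zero, add_zero] at h3
  exact h3

lemma finrank_piece (hn : 2 ≤ n) (hr : 4 ≤ r) (k : ℕ) :
    Module.finrank ℂ ↥(idealPiece n (II n r hn hr) k) =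
      ((Tk n k).filter (fun a => ¬ CC n r a)).card := by
  rw [piece_eq n r hn hr k]
  exact finrank_supported n _

lemma HF_II (hn : 2 ≤ n) (hr : 4 ≤ r) (k : ℕ) :
    HF n (II n r hn hr) k =
      min (Module.finrank ℂ ↥(homogeneousSubmodule (Fin (n + 1)) ℂ k)) r := by
  rw [HF, finrank_piece n r hn hr k, finrank_homog]
  have h1 := Finset.card_filter_add_card_filter_not
    (s := Tk n k) (p := fun a => CC n r a)
  rw [card_filter_CC n r hn hr] at h1
  have h2 : min (Tk n k).card r ≤ (Tk n k).card := min_le_left _ _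
  omega

/-! ### the monomials of J -/

lemma mono_mem_J (hn : 2 ≤ n) (hr : 4 ≤ r) {a : Ex n} (c : ℂ) (h : ¬ Bexp n r a) :
    monomial a c ∈ Ideal.span
      ({p | ∃ i : Fin (n + 1), (i : ℕ) ≤ n - 2 ∧ p = X i} ∪
        {(X (prevI n) : MvPolynomial (Fin (n + 1)) ℂ) ^ r}) := by
  rw [Bexp, not_and_or] at h
  rcases h with h | h
  · push_neg at h
    obtain ⟨i, hi, hne⟩ := h
    have hle : Finsupp.single i 1 ≤ a := Finsupp.single_le_iff.2 (by omega)
    have heq : a - Finsupp.single i 1 + Finsupp.single i 1 = a := tsub_add_cancel_of_le hle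
    have : monomial a c = monomial (a - Finsupp.single i 1) c * X i := by
      rw [X, monomial_mul, mul_one, heq]
    rw [this]
    apply Ideal.mul_mem_left
    apply Ideal.subset_span
    exact Or.inl ⟨i, hi, rfl⟩
  · push_neg at h
    have hle : Finsupp.single (prevI n) r ≤ a := Finsupp.single_le_iff.2 (by omega)
    have heq : a - Finsupp.single (prevI n) r + Finsupp.single (prevI n) r = a :=
      tsub_add_cancel_of_le hle
    have : monomial a c = monomial (a - Finsupp.single (prevI n) r) c * (X (prevI n)) ^ r := by
      rw [X_pow_eq_monomial, monomial_mul, mul_one, heq]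
    rw [this]
    apply Ideal.mul_mem_left
    apply Ideal.subset_span
    exact Or.inr rfl

def JJ : Ideal (MvPolynomial (Fin (n + 1)) ℂ) where
  carrier := {f | ∀ a ∈ f.support, ¬ Bexp n r a}
  zero_mem' := by
    intro a ha
    simp at ha
  add_mem' := by
    intro f g hf hg a ha
    rcases Finset.mem_union.1 (MvPolynomial.support_add ha) with h | h
    · exact hf a h
    · exact hg a h
  smul_mem' := by
    intro c f hf a ha
    rw [smul_eq_mul] at ha
    obtain ⟨b, _, a', ha', rfl⟩ := Finset.mem_add.1 (MvPolynomial.support_mul c f ha)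
    intro hb
    exact hf a' ha' (Bexp_mono n r (le_add_of_nonneg_left zero_le) hb)

lemma mem_J (hn : 2 ≤ n) (hr : 4 ≤ r) (f : MvPolynomial (Fin (n + 1)) ℂ) :
    f ∈ Ideal.span
      ({p | ∃ i : Fin (n + 1), (i : ℕ) ≤ n - 2 ∧ p = X i} ∪
        {(X (prevI n) : MvPolynomial (Fin (n + 1)) ℂ) ^ r}) ↔
      ∀ a ∈ f.support, ¬ Bexp n r a := by
  constructor
  · intro hf
    have hle : Ideal.span
        ({p | ∃ i : Fin (n + 1), (i : ℕ) ≤ n - 2 ∧ p = X i} ∪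
          {(X (prevI n) : MvPolynomial (Fin (n + 1)) ℂ) ^ r}) ≤ JJ n r := by
      rw [Ideal.span_le]
      rintro p (⟨i, hi, rfl⟩ | hp)
      · intro a ha
        rw [MvPolynomial.support_X, Finset.mem_singleton] at ha
        subst ha
        intro hB
        have := hB.1 i hi
        rw [Finsupp.single_apply, if_pos rfl] at this
        omega
      · rw [Set.mem_singleton_iff] at hp
        subst hp
        intro a ha
        rw [X_pow_eq_monomial, MvPolynomial.support_monomial, if_neg one_ne_zero,
          Finset.mem_singleton] at ha
        subst ha
        intro hB
        have := hB.2
        rw [Finsupp.single_apply, if_pos rfl] at this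
        omega
    exact hle hf
  · intro hf
    rw [MvPolynomial.as_sum f]
    apply Ideal.sum_mem
    intro a ha
    exact mono_mem_J n r hn hr _ (hf a ha)

/-! ### lower bound ideals -/

def MM (k : ℕ) : Ideal (MvPolynomial (Fin (n + 1)) ℂ) where
  carrier := {f | ∀ a ∈ f.support, k ≤ a.degree}
  zero_mem' := by
    intro a ha
    simp at ha
  add_mem' := by
    intro f g hf hg a ha
    rcases Finset.mem_union.1 (MvPolynomial.support_add ha) with h | h
    · exact hf a h
    · exact hg a h
  smul_mem' := by
    intro c f hf a ha
    rw [smul_eq_mul] at ha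
    obtain ⟨b, _, a', ha', rfl⟩ := Finset.mem_add.1 (MvPolynomial.support_mul c f ha)
    have := hf a' ha'
    rw [deg_add]
    omega

lemma irrel_le_MM : irrel n ≤ MM n 1 := by
  rw [irrel, Ideal.span_le]
  rintro p ⟨i, rfl⟩
  intro a ha
  rw [MvPolynomial.support_X, Finset.mem_singleton] at ha
  subst ha
  rw [deg_single]

lemma irrel_pow_le (k : ℕ) : (irrel n) ^ k ≤ MM n k := by
  induction k with
  | zero =>
    intro f _
    intro a _
    exact Nat.zero_le _
  | succ k ih =>
    rw [pow_succ]
    apply Ideal.mul_le.2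
    intro g hg x hx a ha
    obtain ⟨b, hb, a', ha', rfl⟩ := Finset.mem_add.1 (MvPolynomial.support_mul g x ha)
    have h1 := ih hg b hb
    have h2 := irrel_le_MM n hx a' ha'
    rw [deg_add]
    omega

/-! ### saturation -/

lemma sat_eq (hn : 2 ≤ n) (hr : 4 ≤ r) :
    satSet (II n r hn hr) (irrel n) =
      ↑(Ideal.span
        ({p | ∃ i : Fin (n + 1), (i : ℕ) ≤ n - 2 ∧ p = X i} ∪
          {(X (prevI n) : MvPolynomial (Fin (n + 1)) ℂ) ^ r})) := by
  ext f
  constructor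
  · intro hsat
    replace hsat : ∃ k : ℕ, ∀ g ∈ (irrel n) ^ k, f * g ∈ II n r hn hr := hsat
    obtain ⟨k, hk⟩ := hsat
    have hXk : (X (lastI n) : MvPolynomial (Fin (n + 1)) ℂ) ^ k ∈ (irrel n) ^ k :=
      Ideal.pow_mem_pow (Ideal.subset_span (Set.mem_range_self (lastI n))) k
    have hI := hk _ hXk
    rw [SetLike.mem_coe, mem_J n r hn hr]
    intro a ha hB
    have hCC : CC n r (a + Finsupp.single (lastI n) k) :=
      Bexp_CC n r hn hr (Bexp_add_last n r hn hB)
    have hco : coeff (a + Finsupp.single (lastI n) k)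
        (f * (X (lastI n) : MvPolynomial (Fin (n + 1)) ℂ) ^ k) = coeff a f := by
      rw [X_pow_eq_monomial, coeff_mul_monomial, mul_one]
    have hsup : a + Finsupp.single (lastI n) k ∈
        (f * (X (lastI n) : MvPolynomial (Fin (n + 1)) ℂ) ^ k).support := by
      rw [MvPolynomial.mem_support_iff, hco]
      exact MvPolynomial.mem_support_iff.1 ha
    exact hI _ hsup hCC
  · intro hf
    rw [SetLike.mem_coe, mem_J n r hn hr] at hf
    show ∃ k : ℕ, ∀ g ∈ (irrel n) ^ k, f * g ∈ II n r hn hr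
    refine ⟨r, fun g hg => ?_⟩
    intro a ha
    obtain ⟨b, hb, c, hc, rfl⟩ := Finset.mem_add.1 (MvPolynomial.support_mul f g ha)
    intro hCC
    have hBc : ¬ Bexp n r (b + c) := fun h =>
      hf b hb (Bexp_mono n r (le_add_of_nonneg_right zero_le) h)
    have hcd : r ≤ c.degree := irrel_pow_le n r hg c hc
    have hdeg : r - 1 ≤ (b + c).degree := by
      rw [deg_add]
      omega
    exact hBc ((CC_high n r hn hr hdeg).1 hCC)

lemma X0_not_mem (hn : 2 ≤ n) (hr : 4 ≤ r) :
    (X (0 : Fin (n + 1)) : MvPolynomial (Fin (n + 1)) ℂ) ^ (r - 2) ∉ II n r hn hr := by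
  intro h
  have hsup : Finsupp.single (0 : Fin (n + 1)) (r - 2) ∈
      ((X (0 : Fin (n + 1)) : MvPolynomial (Fin (n + 1)) ℂ) ^ (r - 2)).support := by
    rw [X_pow_eq_monomial, MvPolynomial.support_monomial, if_neg one_ne_zero]
    exact Finset.mem_singleton_self _
  exact h _ hsup (CC_single0 n r hn hr)

end Nonslip

/-- For `n ≥ 2`, `r ≥ 4` there is a homogeneous ideal `I` with Hilbert function of `S/I` equal to
`min(dim S_k, r)`, with saturation `(α_0,…,α_{n−2},α_{n−1}^r)`, and with `α_0^{r−2} ∉ I`. -/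
theorem exists_nonslip_ideal (n r : ℕ) (hn : 2 ≤ n) (hr : 4 ≤ r) :
    ∃ I : Ideal (MvPolynomial (Fin (n + 1)) ℂ),
      IsHomog n I ∧
      (∀ k : ℕ, HF n I k = min (Module.finrank ℂ ↥(homogeneousSubmodule (Fin (n + 1)) ℂ k)) r) ∧
      satSet I (irrel n) =
        ((Ideal.span ({p | ∃ i : Fin (n + 1), (i : ℕ) ≤ n - 2 ∧ p = X i} ∪
            {(X (⟨n - 1, by omega⟩ : Fin (n + 1)))^r}) :
          Ideal (MvPolynomial (Fin (n + 1)) ℂ)) : Set (MvPolynomial (Fin (n + 1)) ℂ)) ∧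
      (X (0 : Fin (n + 1)))^(r - 2) ∉ I := by
  refine ⟨Nonslip.II n r hn hr, Nonslip.isHomog_II n r hn hr,
    fun k => Nonslip.HF_II n r hn hr k, ?_, Nonslip.X0_not_mem n r hn hr⟩
  exact Nonslip.sat_eq n r hn hr

end
end
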